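/- arXiv:2311.05313 — 12 statements merged into one kernel-verified Lean document; each statement's English description precedes it below -/
import Mathlib

section
/- Let f be L-smooth and convex on a compact convex set P of diameter D, and let (x_t) be the iterates of the Frank-Wolfe algorithm with step-size γ_t = 2/(t+2), i.e., x_{t+1} = (1-γ_t)x_t + γ_t v_t where v_t ∈ argmin_{v∈P}⟪∇f(x_t), v⟫, starting from any x_0 ∈ P. Then for all t ≥ 1, f(x_t) - min_{x∈P} f(x) ≤ 2LD²/(t+2). -/
open scoped RealInnerProductSpace BigOperators

/-- **Primal convergence of the Frank-Wolfe algorithm.** With the open loop step-size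
`γ_t = 2/(t+2)`, for an `L`-smooth convex `f` over a compact convex `P` of diameter `D`,
the iterates satisfy `f (x_t) - f x* ≤ 2 L D² / (t+2)` for all `t ≥ 1`. -/
theorem fw_primal_convergence {n : ℕ} (P : Set (EuclideanSpace ℝ (Fin n)))
    (hPne : P.Nonempty) (hPc : IsCompact P) (hPconv : Convex ℝ P)
    (L D : ℝ) (hL : 0 ≤ L)
    (hD : ∀ a ∈ P, ∀ b ∈ P, ‖a - b‖ ≤ D)
    (f : EuclideanSpace ℝ (Fin n) → ℝ) (g : EuclideanSpace ℝ (Fin n) → EuclideanSpace ℝ (Fin n))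
    (hdiff : ∀ x ∈ P, HasGradientAt f (g x) x)
    (hconv : ∀ x ∈ P, ∀ y ∈ P, f y - f x ≥ ⟪g x, y - x⟫)
    (hsmooth : ∀ x ∈ P, ∀ y ∈ P, f y - f x ≤ ⟪g x, y - x⟫ + L / 2 * ‖y - x‖ ^ 2)
    (x v : ℕ → EuclideanSpace ℝ (Fin n)) (hx0 : x 0 ∈ P)
    (hvP : ∀ t, v t ∈ P)
    (hvmin : ∀ t, IsMinOn (fun z => ⟪g (x t), z⟫) P (v t))
    (hstep : ∀ t : ℕ, x (t + 1) = (1 - 2 / ((t : ℝ) + 2)) • x t + (2 / ((t : ℝ) + 2)) • v t)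
    (xstar : EuclideanSpace ℝ (Fin n)) (hxstar : xstar ∈ P) (hmin : IsMinOn f P xstar) :
    ∀ t : ℕ, 1 ≤ t → f (x t) - f xstar ≤ 2 * L * D ^ 2 / ((t : ℝ) + 2) := by
  obtain ⟨a0, ha0⟩ := hPne
  have hD0 : 0 ≤ D := le_trans (by simp) (hD a0 ha0 a0 ha0)
  have hxP : ∀ t, x t ∈ P := by
    intro t
    induction t with
    | zero => exact hx0
    | succ t ih =>
      rw [hstep t]
      have h2 : (0:ℝ) < (t:ℝ) + 2 := by positivity
      refine hPconv ih (hvP t) ?_ (by positivity) (by ring)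
      rw [sub_nonneg, div_le_one h2]
      have : (0:ℝ) ≤ (t:ℝ) := Nat.cast_nonneg t
      linarith
  have key : ∀ t : ℕ, f (x (t+1)) - f xstar ≤
      (1 - 2/((t:ℝ)+2)) * (f (x t) - f xstar) + 2 * L * D^2 / ((t:ℝ)+2)^2 := by
    intro t
    have h2 : (0:ℝ) < (t:ℝ) + 2 := by positivity
    set γ : ℝ := 2/((t:ℝ)+2) with hγ
    have hγ0 : 0 ≤ γ := by positivity
    have hdx : x (t+1) - x t = γ • (v t - x t) := by
      rw [hstep t]; module
    have hs := hsmooth (x t) (hxP t) (x (t+1)) (hxP (t+1))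
    rw [hdx, real_inner_smul_right, norm_smul] at hs
    have hnorm : ‖v t - x t‖ ≤ D := hD (v t) (hvP t) (x t) (hxP t)
    have hnorm0 : 0 ≤ ‖v t - x t‖ := norm_nonneg _
    have hlin : ⟪g (x t), v t⟫ ≤ ⟪g (x t), xstar⟫ := hvmin t hxstar
    have hcv : f xstar - f (x t) ≥ ⟪g (x t), xstar - x t⟫ := hconv (x t) (hxP t) xstar hxstar
    rw [inner_sub_right] at hcv
    have hvx : ⟪g (x t), v t - x t⟫ ≤ f xstar - f (x t) := by
      rw [inner_sub_right]; linarith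
    rw [Real.norm_eq_abs, abs_of_nonneg hγ0] at hs
    have hsq : ‖v t - x t‖^2 ≤ D^2 := by nlinarith
    have hγsq : γ^2 = 4 / ((t:ℝ)+2)^2 := by
      rw [hγ]; field_simp; ring
    have h1 : L / 2 * (γ * ‖v t - x t‖)^2 ≤ 2 * L * D^2 / ((t:ℝ)+2)^2 := by
      have : (γ * ‖v t - x t‖)^2 = γ^2 * ‖v t - x t‖^2 := by ring
      rw [this, hγsq]
      have hLd : L / 2 * (4 / ((t:ℝ)+2)^2 * ‖v t - x t‖^2) =
          2 * L * ‖v t - x t‖^2 / ((t:ℝ)+2)^2 := by ring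
      rw [hLd]
      apply div_le_div_of_nonneg_right _ (by positivity)
      nlinarith
    have h3 : γ * ⟪g (x t), v t - x t⟫ ≤ γ * (f xstar - f (x t)) :=
      mul_le_mul_of_nonneg_left hvx hγ0
    nlinarith [hs, h1, h3]
  intro t ht
  induction t with
  | zero => omega
  | succ s ih =>
    have k := key s
    by_cases hs0 : s = 0
    · subst hs0
      have hLD : 0 ≤ L * D^2 := by positivity
      norm_num at k ⊢
      nlinarith
    · have hs1 : 1 ≤ s := Nat.one_le_iff_ne_zero.mpr hs0
      have ihs := ih hs1
      have h2 : (0:ℝ) < (s:ℝ) + 2 := by positivity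
      have h3 : (0:ℝ) < (s:ℝ) + 3 := by positivity
      have hc : (0:ℝ) ≤ 2 * L * D^2 := by positivity
      have hcoef : 0 ≤ 1 - 2/((s:ℝ)+2) := by
        rw [sub_nonneg, div_le_one h2]
        have : (0:ℝ) ≤ (s:ℝ) := Nat.cast_nonneg s
        linarith
      have step1 : (1 - 2/((s:ℝ)+2)) * (f (x s) - f xstar) ≤
          (1 - 2/((s:ℝ)+2)) * (2 * L * D^2 / ((s:ℝ)+2)) :=
        mul_le_mul_of_nonneg_left ihs hcoef
      have e1 : (1 - 2/((s:ℝ)+2)) * (2 * L * D^2 / ((s:ℝ)+2)) + 2 * L * D^2 / ((s:ℝ)+2)^2 =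
          2 * L * D^2 * ((s:ℝ)+1) / ((s:ℝ)+2)^2 := by
        field_simp; ring
      have e2 : 2 * L * D^2 * ((s:ℝ)+1) / ((s:ℝ)+2)^2 ≤ 2 * L * D^2 / ((s:ℝ)+3) := by
        rw [div_le_div_iff₀ (by positivity) h3]
        nlinarith
      have : ((s:ℕ)+1 : ℕ) = s + 1 := rfl
      push_cast
      have goal_eq : ((s:ℝ)+1) + 2 = (s:ℝ) + 3 := by ring
      rw [goal_eq]
      linarith [k, step1, e1, e2]
end

section
/- Suppose a sequence of nonnegative reals h_t satisfies h_{t+1} ≤ (1 - γ_t)h_t + γ_t²·C with γ_t = 2/(t+2) and C = LD²/2. Then h_t ≤ 2LD²/(t+2) for all t ≥ 1. -/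
/-- **Contraction recursion.** If `h_{t+1} ≤ (1 - γ_t) h_t + γ_t² C` with `γ_t = 2/(t+2)`
and `C = L D² / 2`, `h_t ≥ 0`, `L, D ≥ 0`, then `h_t ≤ 2 L D² / (t+2)` for all `t ≥ 1`. -/
theorem fw_contraction_recursion (h : ℕ → ℝ) (L D : ℝ) (hL : 0 ≤ L) (hD : 0 ≤ D)
    (hnn : ∀ t, 0 ≤ h t)
    (hrec : ∀ t : ℕ,
      h (t + 1) ≤ (1 - 2 / ((t : ℝ) + 2)) * h t + (2 / ((t : ℝ) + 2)) ^ 2 * (L * D ^ 2 / 2)) :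
    ∀ t : ℕ, 1 ≤ t → h t ≤ 2 * L * D ^ 2 / ((t : ℝ) + 2) := by
  have hC : 0 ≤ L * D ^ 2 := mul_nonneg hL (sq_nonneg D)
  intro t ht
  induction t with
  | zero => omega
  | succ n ih =>
    rcases Nat.eq_or_lt_of_le ht with h1 | h1
    · -- n = 0, t = 1
      have hn : n = 0 := by omega
      subst hn
      have := hrec 0
      norm_num at this
      calc h 1 ≤ L * D ^ 2 / 2 := this
        _ ≤ 2 * L * D ^ 2 / ((1 : ℕ) + 2 : ℝ) := by
            push_cast; nlinarith
    · have hn : 1 ≤ n := by omega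
      have ihn := ih hn
      have hr := hrec n
      have hpos : (0 : ℝ) < (n : ℝ) + 2 := by positivity
      have hcoef : 0 ≤ 1 - 2 / ((n : ℝ) + 2) := by
        rw [sub_nonneg, div_le_one hpos]; linarith
      have step : h (n + 1) ≤ (1 - 2 / ((n : ℝ) + 2)) * (2 * L * D ^ 2 / ((n : ℝ) + 2))
          + (2 / ((n : ℝ) + 2)) ^ 2 * (L * D ^ 2 / 2) := by
        refine hr.trans (add_le_add_left (mul_le_mul_of_nonneg_left ihn hcoef) _)
      refine step.trans ?_
      have heq : (1 - 2 / ((n : ℝ) + 2)) * (2 * L * D ^ 2 / ((n : ℝ) + 2))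
          + (2 / ((n : ℝ) + 2)) ^ 2 * (L * D ^ 2 / 2)
          = 2 * L * D ^ 2 * ((n : ℝ) + 1) / ((n : ℝ) + 2) ^ 2 := by
        field_simp
        ring
      rw [heq]
      push_cast
      rw [div_le_div_iff₀ (by positivity) (by positivity)]
      nlinarith [hC]
end

section
/- Let f be L-smooth (not necessarily convex) on a compact convex set P of diameter D, let T ∈ ℕ, and run the Frank-Wolfe algorithm with constant step-size γ = 1/√(T+1). Then the minimum Frank-Wolfe gap satisfies min_{0≤t≤T} max_{v∈P}⟪∇f(x_t), x_t - v⟫ ≤ max{2h_0, LD²}/√(T+1), where h_0 = f(x_0) - min_{x∈P} f(x). -/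
open scoped RealInnerProductSpace BigOperators

/-- **Convergence for nonconvex objectives.** With constant step `γ = 1/√(T+1)`, the
minimum Frank-Wolfe gap over `t = 0, …, T` is at most `max {2 h₀, L D²} / √(T+1)`,
where `h₀ = f x₀ - min_P f`. -/
theorem fw_nonconvex_convergence {n : ℕ} (P : Set (EuclideanSpace ℝ (Fin n)))
    (hPne : P.Nonempty) (hPc : IsCompact P) (hPconv : Convex ℝ P)
    (L D : ℝ) (hD : ∀ a ∈ P, ∀ b ∈ P, ‖a - b‖ ≤ D)
    (f : EuclideanSpace ℝ (Fin n) → ℝ) (g : EuclideanSpace ℝ (Fin n) → EuclideanSpace ℝ (Fin n))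
    (hdiff : ∀ x ∈ P, HasGradientAt f (g x) x)
    (hsmooth : ∀ x ∈ P, ∀ y ∈ P, f y - f x ≤ ⟪g x, y - x⟫ + L / 2 * ‖y - x‖ ^ 2)
    (T : ℕ)
    (x v : ℕ → EuclideanSpace ℝ (Fin n)) (hx0 : x 0 ∈ P)
    (hvP : ∀ t, v t ∈ P)
    (hvmin : ∀ t, IsMinOn (fun z => ⟪g (x t), z⟫) P (v t))
    (hstep : ∀ t : ℕ, x (t + 1) =
      (1 - 1 / Real.sqrt ((T : ℝ) + 1)) • x t + (1 / Real.sqrt ((T : ℝ) + 1)) • v t)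
    (xstar : EuclideanSpace ℝ (Fin n)) (hxstar : xstar ∈ P) (hmin : IsMinOn f P xstar) :
    ∃ t ≤ T, ∀ w ∈ P,
      ⟪g (x t), x t - w⟫ ≤ max (2 * (f (x 0) - f xstar)) (L * D ^ 2) / Real.sqrt ((T : ℝ) + 1) := by
  set s : ℝ := Real.sqrt ((T : ℝ) + 1) with hsdef
  have hT1 : (0:ℝ) < (T : ℝ) + 1 := by positivity
  have hssq : s ^ 2 = (T : ℝ) + 1 := Real.sq_sqrt (le_of_lt hT1)
  have hs1 : 1 ≤ s := by nlinarith [Real.sqrt_nonneg ((T : ℝ) + 1), hssq]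
  have hs0 : (0:ℝ) < s := lt_of_lt_of_le one_pos hs1
  set γ : ℝ := 1 / s with hγdef
  have hγ0 : (0:ℝ) < γ := by positivity
  have hγ1 : γ ≤ 1 := by rw [hγdef, div_le_one hs0]; exact hs1
  obtain ⟨p0, hp0⟩ := hPne
  have hD0 : (0:ℝ) ≤ D := le_trans (by simp) (hD p0 hp0 p0 hp0)
  have xmem : ∀ t, x t ∈ P := by
    intro t
    induction t with
    | zero => exact hx0
    | succ t ih =>
      rw [hstep t]
      exact hPconv ih (hvP t) (by linarith) (le_of_lt hγ0) (by ring)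
  set G : ℕ → ℝ := fun t => ⟪g (x t), x t - v t⟫ with hGdef
  set C : ℝ := max L 0 * D ^ 2 / 2 with hCdef
  have hC0 : (0:ℝ) ≤ C := by
    rw [hCdef]
    have : (0:ℝ) ≤ max L 0 := le_max_right _ _
    positivity
  have hstep' : ∀ t, f (x (t + 1)) ≤ f (x t) - γ * G t + γ ^ 2 * C := by
    intro t
    have hdx : x (t + 1) - x t = γ • (v t - x t) := by rw [hstep t]; module
    have h1 := hsmooth (x t) (xmem t) (x (t + 1)) (xmem (t + 1))
    rw [hdx] at h1
    have hip : ⟪g (x t), γ • (v t - x t)⟫ = -(γ * G t) := by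
      rw [real_inner_smul_right, hGdef]
      simp only [inner_sub_right]
      ring
    have hnorm : ‖γ • (v t - x t)‖ ^ 2 = γ ^ 2 * ‖v t - x t‖ ^ 2 := by
      rw [norm_smul, Real.norm_eq_abs, abs_of_pos hγ0]
      ring
    rw [hip, hnorm] at h1
    have hvd : ‖v t - x t‖ ≤ D := hD (v t) (hvP t) (x t) (xmem t)
    have hnn : (0:ℝ) ≤ ‖v t - x t‖ := norm_nonneg _
    have key : L / 2 * ‖v t - x t‖ ^ 2 ≤ C := by
      rw [hCdef]
      rcases le_or_gt L 0 with hL | hL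
      · have : max L 0 = 0 := max_eq_right hL
        rw [this]
        nlinarith
      · have : max L 0 = L := max_eq_left (le_of_lt hL)
        rw [this]
        nlinarith [mul_le_mul hvd hvd hnn hD0, le_of_lt hL]
    nlinarith [sq_nonneg γ, mul_le_mul_of_nonneg_left key (sq_nonneg γ)]
  have hsum : ∀ N : ℕ, f (x N) ≤ f (x 0) - γ * ∑ t ∈ Finset.range N, G t + (N : ℝ) * γ ^ 2 * C := by
    intro N
    induction N with
    | zero => simp
    | succ N ih =>
      have h := hstep' N
      rw [Finset.sum_range_succ]
      push_cast
      nlinarith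
  have hfstar : f xstar ≤ f (x (T + 1)) := hmin (xmem (T + 1))
  have hh0 : (0:ℝ) ≤ f (x 0) - f xstar := by
    have : f xstar ≤ f (x 0) := hmin hx0
    linarith
  have hsumT := hsum (T + 1)
  set S : ℝ := ∑ t ∈ Finset.range (T + 1), G t with hSdef
  have hkey : γ * S ≤ (f (x 0) - f xstar) + ((T : ℝ) + 1) * γ ^ 2 * C := by
    push_cast at hsumT
    linarith
  set M : ℝ := max (2 * (f (x 0) - f xstar)) (L * D ^ 2) with hMdef
  have hM1 : 2 * (f (x 0) - f xstar) ≤ M := le_max_left _ _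
  have hM0 : (0:ℝ) ≤ M := le_trans (by linarith) hM1
  have h2C : 2 * C ≤ M := by
    rw [hCdef]
    rcases le_or_gt L 0 with hL | hL
    · rw [max_eq_right hL]
      simpa using hM0
    · rw [max_eq_left (le_of_lt hL)]
      calc 2 * (L * D ^ 2 / 2) = L * D ^ 2 := by ring
        _ ≤ M := le_max_right _ _
  have hSsM : S ≤ s * M := by
    have h1 : ((T : ℝ) + 1) * γ ^ 2 = 1 := by
      rw [hγdef, ← hssq]
      field_simp
    rw [h1, one_mul] at hkey
    have h2 : S ≤ s * ((f (x 0) - f xstar) + C) := by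
      have hsne : s ≠ 0 := ne_of_gt hs0
      calc S = s * (1 / s * S) := by field_simp
        _ ≤ s * ((f (x 0) - f xstar) + C) :=
          mul_le_mul_of_nonneg_left hkey (le_of_lt hs0)
    have h3 : (f (x 0) - f xstar) + C ≤ M := by linarith
    calc S ≤ s * ((f (x 0) - f xstar) + C) := h2
      _ ≤ s * M := mul_le_mul_of_nonneg_left h3 (le_of_lt hs0)
  have havg : ∃ t ∈ Finset.range (T + 1), G t ≤ S / ((T : ℝ) + 1) := by
    apply Finset.exists_le_of_sum_le (by simp)
    rw [Finset.sum_const, Finset.card_range, nsmul_eq_mul]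
    push_cast
    rw [mul_div_cancel₀ _ (ne_of_gt hT1)]
  obtain ⟨t, htmem, htG⟩ := havg
  refine ⟨t, Finset.mem_range_succ_iff.mp htmem, ?_⟩
  intro w hw
  have hvw : ⟪g (x t), v t⟫ ≤ ⟪g (x t), w⟫ := hvmin t hw
  have hGw : ⟪g (x t), x t - w⟫ ≤ G t := by
    rw [hGdef]
    simp only [inner_sub_right]
    linarith
  have hfin : S / ((T : ℝ) + 1) ≤ M / s := by
    rw [div_le_div_iff₀ hT1 hs0]
    have h4 := mul_le_mul_of_nonneg_right hSsM (le_of_lt hs0)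
    have h5 : s * M * s = M * ((T : ℝ) + 1) := by rw [← hssq]; ring
    linarith
  linarith
end

section
/- Let f be L-smooth and convex on P, and let x_t, v_t ∈ P with ⟪∇f(x_t), x_t - v_t⟫ ≥ L‖x_t - v_t‖². Then for x_{t+1} = v_t (i.e., step-size γ = 1), f(x_t) - f(x_{t+1}) ≥ ⟪∇f(x_t), x_t - v_t⟫/2, and if v_t minimizes ⟪∇f(x_t), ·⟫ over P, then f(x_t) - f(x_{t+1}) ≥ (f(x_t) - min_P f)/2. -/
open scoped RealInnerProductSpace BigOperators

/-- **Truncated short step (γ = 1) regime.** If `f` is `L`-smooth and convex on a compact convex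
`P`, `x_t, v_t ∈ P` with `⟪∇f x_t, x_t - v_t⟫ ≥ L ‖x_t - v_t‖²`, and `x_{t+1} = v_t`, then
`f x_t - f x_{t+1} ≥ ⟪∇f x_t, x_t - v_t⟫ / 2`; if moreover `v_t` minimizes `⟪∇f x_t, ·⟫` over
`P` and `x*` minimizes `f` over `P`, then `f x_t - f x_{t+1} ≥ (f x_t - f x*) / 2`. -/
theorem fw_truncated_short_step {n : ℕ} (P : Set (EuclideanSpace ℝ (Fin n)))
    (hPne : P.Nonempty) (hPc : IsCompact P) (hPconv : Convex ℝ P) (L : ℝ)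
    (f : EuclideanSpace ℝ (Fin n) → ℝ) (g : EuclideanSpace ℝ (Fin n) → EuclideanSpace ℝ (Fin n))
    (hdiff : ∀ x ∈ P, HasGradientAt f (g x) x)
    (hconv : ∀ x ∈ P, ∀ y ∈ P, f y - f x ≥ ⟪g x, y - x⟫)
    (hsmooth : ∀ x ∈ P, ∀ y ∈ P, f y - f x ≤ ⟪g x, y - x⟫ + L / 2 * ‖y - x‖ ^ 2)
    (xt vt : EuclideanSpace ℝ (Fin n)) (hxt : xt ∈ P) (hvt : vt ∈ P)
    (hbig : ⟪g xt, xt - vt⟫ ≥ L * ‖xt - vt‖ ^ 2) :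
    f xt - f vt ≥ ⟪g xt, xt - vt⟫ / 2 ∧
      (IsMinOn (fun z => ⟪g xt, z⟫) P vt →
        ∀ xstar ∈ P, IsMinOn f P xstar → f xt - f vt ≥ (f xt - f xstar) / 2) := by
  have hs := hsmooth xt hxt vt hvt
  have hnorm : ‖vt - xt‖ = ‖xt - vt‖ := norm_sub_rev _ _
  have hinn : ⟪g xt, vt - xt⟫ = -⟪g xt, xt - vt⟫ := by
    rw [← inner_neg_right]; congr 1; abel
  have h1 : f xt - f vt ≥ ⟪g xt, xt - vt⟫ / 2 := by
    rw [hinn, hnorm] at hs; linarith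
  refine ⟨h1, fun hmin xstar hxs hfmin => ?_⟩
  have h2 : ⟪g xt, vt⟫ ≤ ⟪g xt, xstar⟫ := hmin hxs
  have h3 : f xstar - f xt ≥ ⟪g xt, xstar - xt⟫ := hconv xt hxt xstar hxs
  have h4 : ⟪g xt, xstar - xt⟫ = ⟪g xt, xstar⟫ - ⟪g xt, xt⟫ := inner_sub_right _ _ _
  have h5 : ⟪g xt, xt - vt⟫ = ⟪g xt, xt⟫ - ⟪g xt, vt⟫ := inner_sub_right _ _ _
  linarith
end

section
/- Let f be differentiable and L-smooth with short step γ_t = min{⟪∇f(x_t), x_t - v_t⟫/(L‖x_t - v_t‖²), 1} ∈ [0,1] (where ⟪∇f(x_t), x_t - v_t⟫ ≥ 0), and x_{t+1} = (1-γ_t)x_t + γ_t v_t. Then f(x_t) - f(x_{t+1}) ≥ ⟪∇f(x_t), x_t - v_t⟫²/(2L‖x_t - v_t‖²) when γ_t < 1. -/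
open scoped RealInnerProductSpace BigOperators

/-- **Primal progress of the short step.** With `γ_t = ⟪∇f x_t, x_t - v_t⟫/(L ‖x_t - v_t‖²) < 1`
(the untruncated short step) and `x_{t+1} = (1-γ_t) x_t + γ_t v_t`, `L`-smoothness gives
`f x_t - f x_{t+1} ≥ ⟪∇f x_t, x_t - v_t⟫² / (2 L ‖x_t - v_t‖²)`. -/
theorem fw_short_step_progress {n : ℕ} (S : Set (EuclideanSpace ℝ (Fin n)))
    (hSconv : Convex ℝ S) (L : ℝ) (hL : 0 < L)
    (f : EuclideanSpace ℝ (Fin n) → ℝ) (g : EuclideanSpace ℝ (Fin n) → EuclideanSpace ℝ (Fin n))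
    (hdiff : ∀ x ∈ S, HasGradientAt f (g x) x)
    (hsmooth : ∀ x ∈ S, ∀ y ∈ S, f y - f x ≤ ⟪g x, y - x⟫ + L / 2 * ‖y - x‖ ^ 2)
    (xt vt : EuclideanSpace ℝ (Fin n)) (hxt : xt ∈ S) (hvt : vt ∈ S) (hne : xt ≠ vt)
    (hpos : 0 ≤ ⟪g xt, xt - vt⟫)
    (γ : ℝ) (hγdef : γ = ⟪g xt, xt - vt⟫ / (L * ‖xt - vt‖ ^ 2)) (hγlt : γ < 1)
    (xt1 : EuclideanSpace ℝ (Fin n)) (hstep : xt1 = (1 - γ) • xt + γ • vt) :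
    f xt - f xt1 ≥ ⟪g xt, xt - vt⟫ ^ 2 / (2 * L * ‖xt - vt‖ ^ 2) := by

  set d := ⟪g xt, xt - vt⟫ with hd
  have hNpos : (0:ℝ) < ‖xt - vt‖ ^ 2 := by
    have h : xt - vt ≠ 0 := sub_ne_zero.mpr hne
    exact pow_pos (norm_pos_iff.mpr h) 2
  have hLN : (0:ℝ) < L * ‖xt - vt‖ ^ 2 := by positivity
  have hγ0 : 0 ≤ γ := by
    rw [hγdef]; exact div_nonneg hpos hLN.le
  have hmem : xt1 ∈ S := by
    rw [hstep]
    exact hSconv hxt hvt (by linarith) hγ0 (by ring)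
  have hdiff1 : xt1 - xt = γ • (vt - xt) := by
    rw [hstep]
    module
  have hs := hsmooth xt hxt xt1 hmem
  rw [hdiff1] at hs
  have hip : ⟪g xt, γ • (vt - xt)⟫ = -(γ * d) := by
    have h : vt - xt = -(xt - vt) := by module
    rw [real_inner_smul_right, h, inner_neg_right, hd]; ring
  have hnorm : ‖γ • (vt - xt)‖ ^ 2 = γ ^ 2 * ‖xt - vt‖ ^ 2 := by
    rw [norm_smul, mul_pow, ← norm_neg (vt - xt), neg_sub, Real.norm_eq_abs, sq_abs]
  rw [hip, hnorm] at hs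
  have hγval : γ * (L * ‖xt - vt‖ ^ 2) = d := by
    rw [hγdef]; exact div_mul_cancel₀ d hLN.ne'
  have : f xt1 - f xt ≤ -(d ^ 2 / (2 * L * ‖xt - vt‖ ^ 2)) := by
    have h1 : -(γ * d) + L / 2 * (γ ^ 2 * ‖xt - vt‖ ^ 2) = -(d ^ 2 / (2 * L * ‖xt - vt‖ ^ 2)) := by
      have : γ = d / (L * ‖xt - vt‖ ^ 2) := hγdef
      rw [this]
      field_simp
      ring
    linarith [hs, h1.le, h1.ge]
  linarith
end

section
/- Let f be differentiable and L-smooth in the gradient sense: ⟪∇f(y) - ∇f(x), y-x⟫ ≤ L‖y-x‖² for all x, y. Let x_{t+1} = (1-γ_t)x_t + γ_t v_t with γ_t = min{⟪∇f(x_t), x_t - v_t⟫/(L‖x_t - v_t‖²), 1}, where ⟪∇f(x_t), x_t - v_t⟫ ≥ 0. Then ⟪∇f(x_{t+1}), x_t - v_t⟫ ≥ 0. -/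
open scoped RealInnerProductSpace BigOperators

/-- **Smoothness implies (altAdaptive).** If `⟪∇f y - ∇f x, y - x⟫ ≤ L ‖y - x‖²` for all `x, y`,
and `x_{t+1} = (1-γ_t) x_t + γ_t v_t` with the truncated short step
`γ_t = min {⟪∇f x_t, x_t - v_t⟫/(L ‖x_t - v_t‖²), 1}`, then `⟪∇f x_{t+1}, x_t - v_t⟫ ≥ 0`. -/
theorem fw_smoothness_implies_altAdaptive {n : ℕ} (L : ℝ) (hL : 0 < L)
    (f : EuclideanSpace ℝ (Fin n) → ℝ) (g : EuclideanSpace ℝ (Fin n) → EuclideanSpace ℝ (Fin n))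
    (hdiff : ∀ x, HasGradientAt f (g x) x)
    (hsmooth : ∀ x y, ⟪g y - g x, y - x⟫ ≤ L * ‖y - x‖ ^ 2)
    (xt vt : EuclideanSpace ℝ (Fin n)) (hne : xt ≠ vt)
    (hpos : 0 ≤ ⟪g xt, xt - vt⟫)
    (γ : ℝ) (hγdef : γ = min (⟪g xt, xt - vt⟫ / (L * ‖xt - vt‖ ^ 2)) 1)
    (xt1 : EuclideanSpace ℝ (Fin n)) (hstep : xt1 = (1 - γ) • xt + γ • vt) :
    0 ≤ ⟪g xt1, xt - vt⟫ := by
  have hd : xt - vt ≠ 0 := sub_ne_zero.mpr hne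
  have hnorm : (0:ℝ) < ‖xt - vt‖ := norm_pos_iff.mpr hd
  have hs : (0:ℝ) < ‖xt - vt‖ ^ 2 := by positivity
  have hγ0 : 0 ≤ γ := by
    rw [hγdef]
    exact le_min (div_nonneg hpos (by positivity)) zero_le_one
  rcases eq_or_lt_of_le hγ0 with h0 | hγpos
  · rw [hstep, ← h0]
    simpa using hpos
  · have hdiff2 : xt1 - xt = γ • (vt - xt) := by
      rw [hstep]; module
    have hγle : γ * (L * ‖xt - vt‖ ^ 2) ≤ ⟪g xt, xt - vt⟫ := by
      have h1 : γ ≤ ⟪g xt, xt - vt⟫ / (L * ‖xt - vt‖ ^ 2) := by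
        rw [hγdef]; exact min_le_left _ _
      exact (le_div_iff₀ (by positivity)).mp h1
    have key := hsmooth xt xt1
    have hinner : ⟪g xt1 - g xt, xt1 - xt⟫
        = γ * (⟪g xt, xt - vt⟫ - ⟪g xt1, xt - vt⟫) := by
      have : vt - xt = -(xt - vt) := by abel
      rw [hdiff2, this, real_inner_smul_right, inner_neg_right, inner_sub_left]
      ring
    have hnorm2 : ‖xt1 - xt‖ ^ 2 = γ ^ 2 * ‖xt - vt‖ ^ 2 := by
      rw [hdiff2, norm_smul, norm_sub_rev, mul_pow, Real.norm_eq_abs, sq_abs]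
    rw [hinner, hnorm2] at key
    have h2 : 0 ≤ γ * ⟪g xt1, xt - vt⟫ := by nlinarith
    exact nonneg_of_mul_nonneg_right h2 hγpos
end

section
/- Let f be L-smooth in the gradient sense and convex, let M = 2L, γ_t = min{⟪∇f(x_t), x_t - v_t⟫/(M‖x_t - v_t‖²), 1}, x_{t+1} = (1-γ_t)x_t + γ_t v_t. Then ⟪∇f(x_{t+1}), x_t - v_t⟫ ≥ (1/2)⟪∇f(x_t), x_t - v_t⟫. -/
open scoped RealInnerProductSpace BigOperators

/-- **Smoothness implies (altAdaptive-simple).** If `f` is `L`-smooth in the gradient sense and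
convex, `M = 2L`, `γ_t = min {⟪∇f x_t, x_t - v_t⟫/(M ‖x_t - v_t‖²), 1}`, and
`x_{t+1} = (1-γ_t) x_t + γ_t v_t`, then `⟪∇f x_{t+1}, x_t - v_t⟫ ≥ (1/2) ⟪∇f x_t, x_t - v_t⟫`. -/
theorem fw_smoothness_implies_altAdaptive_simple {n : ℕ} (L : ℝ) (hL : 0 < L)
    (f : EuclideanSpace ℝ (Fin n) → ℝ) (g : EuclideanSpace ℝ (Fin n) → EuclideanSpace ℝ (Fin n))
    (hdiff : ∀ x, HasGradientAt f (g x) x)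
    (hsmooth : ∀ x y, ⟪g y - g x, y - x⟫ ≤ L * ‖y - x‖ ^ 2)
    (hconv : ∀ x y, f y - f x ≥ ⟪g x, y - x⟫)
    (xt vt : EuclideanSpace ℝ (Fin n)) (hne : xt ≠ vt)
    (hpos : 0 ≤ ⟪g xt, xt - vt⟫)
    (M : ℝ) (hM : M = 2 * L)
    (γ : ℝ) (hγdef : γ = min (⟪g xt, xt - vt⟫ / (M * ‖xt - vt‖ ^ 2)) 1)
    (xt1 : EuclideanSpace ℝ (Fin n)) (hstep : xt1 = (1 - γ) • xt + γ • vt) :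
    (1 / 2) * ⟪g xt, xt - vt⟫ ≤ ⟪g xt1, xt - vt⟫ := by
  have hs : (0:ℝ) < ‖xt - vt‖ ^ 2 :=
    pow_pos (norm_pos_iff.mpr (sub_ne_zero.mpr hne)) 2
  have hM0 : 0 < M := by rw [hM]; linarith
  have hγ0 : 0 ≤ γ := by
    rw [hγdef]
    exact le_min (div_nonneg hpos (by positivity)) zero_le_one
  rcases eq_or_lt_of_le hγ0 with h0 | hγpos
  · have hx1 : xt1 = xt := by rw [hstep, ← h0]; simp
    rw [hx1]; linarith
  · have hkey := hsmooth xt xt1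
    have hx : xt1 - xt = γ • (vt - xt) := by rw [hstep]; module
    have hnorm : ‖xt1 - xt‖ ^ 2 = γ ^ 2 * ‖xt - vt‖ ^ 2 := by
      rw [hx, norm_smul, norm_sub_rev]
      simp [mul_pow, abs_of_nonneg hγ0]
    have hinner : ⟪g xt1 - g xt, xt1 - xt⟫ =
        -γ * (⟪g xt1, xt - vt⟫ - ⟪g xt, xt - vt⟫) := by
      rw [hx]
      rw [real_inner_smul_right]
      have h1 : (vt - xt : EuclideanSpace ℝ (Fin n)) = -(xt - vt) := by abel
      rw [h1, inner_neg_right, inner_sub_left]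
      ring
    rw [hinner, hnorm] at hkey
    have hγle : γ ≤ ⟪g xt, xt - vt⟫ / (M * ‖xt - vt‖ ^ 2) := by
      rw [hγdef]; exact min_le_left _ _
    have hγle' : γ * (M * ‖xt - vt‖ ^ 2) ≤ ⟪g xt, xt - vt⟫ :=
      (le_div_iff₀ (by positivity)).mp hγle
    have hdiv : ⟪g xt, xt - vt⟫ - ⟪g xt1, xt - vt⟫ ≤ L * γ * ‖xt - vt‖ ^ 2 := by
      nlinarith [hkey, hγpos]
    rw [hM] at hγle'
    nlinarith [hdiv, hγle']
end

section
/- Let f be differentiable and convex, let x_{t+1} = (1-γ_t)x_t + γ_t v_t with γ_t = min{⟪∇f(x_t), x_t - v_t⟫/(M‖x_t - v_t‖²), 1} for some M > 0, and suppose ⟪∇f(x_{t+1}), x_t - v_t⟫ ≥ (1/2)⟪∇f(x_t), x_t - v_t⟫. Then f(x_t) - f(x_{t+1}) ≥ γ_t ⟪∇f(x_t), x_t - v_t⟫/2. -/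
open scoped RealInnerProductSpace BigOperators

/-- **Primal progress from (altAdaptive-simple).** If `f` is convex with gradient `g`,
`x_{t+1} = (1-γ_t) x_t + γ_t v_t` with `γ_t = min {⟪∇f x_t, x_t - v_t⟫/(M ‖x_t - v_t‖²), 1}`
for some `M > 0`, and `⟪∇f x_{t+1}, x_t - v_t⟫ ≥ (1/2) ⟪∇f x_t, x_t - v_t⟫`, then
`f x_t - f x_{t+1} ≥ γ_t ⟪∇f x_t, x_t - v_t⟫ / 2`. -/
theorem fw_progress_from_altAdaptive_simple {n : ℕ}
    (f : EuclideanSpace ℝ (Fin n) → ℝ) (g : EuclideanSpace ℝ (Fin n) → EuclideanSpace ℝ (Fin n))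
    (hdiff : ∀ x, HasGradientAt f (g x) x)
    (hconv : ∀ x y, f y - f x ≥ ⟪g x, y - x⟫)
    (xt vt : EuclideanSpace ℝ (Fin n)) (hne : xt ≠ vt)
    (hpos : 0 ≤ ⟪g xt, xt - vt⟫)
    (M : ℝ) (hM : 0 < M)
    (γ : ℝ) (hγdef : γ = min (⟪g xt, xt - vt⟫ / (M * ‖xt - vt‖ ^ 2)) 1)
    (xt1 : EuclideanSpace ℝ (Fin n)) (hstep : xt1 = (1 - γ) • xt + γ • vt)
    (htest : (1 / 2) * ⟪g xt, xt - vt⟫ ≤ ⟪g xt1, xt - vt⟫) :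
    f xt - f xt1 ≥ γ * ⟪g xt, xt - vt⟫ / 2 := by
  have hnorm : (0:ℝ) < ‖xt - vt‖ ^ 2 := by
    have : xt - vt ≠ 0 := sub_ne_zero.mpr hne
    exact pow_pos (norm_pos_iff.mpr this) 2
  have hγ0 : 0 ≤ γ := by
    rw [hγdef]
    exact le_min (div_nonneg hpos (by positivity)) one_pos.le
  have hdiff1 : xt - xt1 = γ • (xt - vt) := by
    rw [hstep]; module
  have key : f xt - f xt1 ≥ ⟪g xt1, xt - xt1⟫ := hconv xt1 xt
  have : ⟪g xt1, xt - xt1⟫ = γ * ⟪g xt1, xt - vt⟫ := by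
    rw [hdiff1, real_inner_smul_right]
  rw [this] at key
  have h2 : γ * ((1 / 2) * ⟪g xt, xt - vt⟫) ≤ γ * ⟪g xt1, xt - vt⟫ :=
    mul_le_mul_of_nonneg_left htest hγ0
  linarith
end

section
/- Let f be L-smooth and convex on the D-neighborhood of a compact convex set P of diameter D. Let x_{t+1} = (1-γ_t)x_t + γ_t v_t with x_t, v_t ∈ P, x_t ≠ v_t, γ_t = min{⟪∇f(x_t), x_t - v_t⟫/(M‖x_t - v_t‖²), 1} ∈ [0,1) for some M > 0, and suppose ⟪∇f(x_{t+1}), x_t - v_t⟫ ≥ 0. Then f(x_t) - f(x_{t+1}) ≥ (⟪∇f(x_t), x_t - v_t⟫² + ⟪∇f(x_{t+1}), x_t - v_t⟫²)/(2·max{L,M}·‖x_t - v_t‖²). -/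
open scoped RealInnerProductSpace BigOperators

theorem cocoercive_aux {n : ℕ} (P N : Set (EuclideanSpace ℝ (Fin n)))
    (hPN : P ⊆ N) (hPconv : Convex ℝ P)
    (L : ℝ) (hL : 0 < L)
    (f : EuclideanSpace ℝ (Fin n) → ℝ) (g : EuclideanSpace ℝ (Fin n) → EuclideanSpace ℝ (Fin n))
    (hconv : ∀ x ∈ N, ∀ y ∈ N, f y - f x ≥ ⟪g x, y - x⟫)
    (hsmooth : ∀ x ∈ N, ∀ y ∈ N, f y - f x ≤ ⟪g x, y - x⟫ + L / 2 * ‖y - x‖ ^ 2)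
    (x y : EuclideanSpace ℝ (Fin n)) (hx : x ∈ P) (hy : y ∈ P) (hxy : x ≠ y) :
    f y - f x - ⟪g x, y - x⟫ ≥ ⟪g y - g x, y - x⟫ ^ 2 / (2 * L * ‖y - x‖ ^ 2) := by
  have hyx : y - x ≠ 0 := sub_ne_zero.mpr (Ne.symm hxy)
  have hQ : (0:ℝ) < ‖y - x‖ ^ 2 := by
    have := norm_pos_iff.mpr hyx
    positivity
  set Q := ‖y - x‖ ^ 2 with hQdef
  set s : ℝ := ⟪g y - g x, y - x⟫ with hs
  have hs' : s = ⟪g y, y - x⟫ - ⟪g x, y - x⟫ := by rw [hs, inner_sub_left]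
  -- s ≥ 0
  have h1 := hconv x (hPN hx) y (hPN hy)
  have h2 := hconv y (hPN hy) x (hPN hx)
  have hxy' : ⟪g y, x - y⟫ = -⟪g y, y - x⟫ := by
    rw [show x - y = -(y - x) by abel, inner_neg_right]
  have hs0 : 0 ≤ s := by rw [hs']; rw [hxy'] at h2; linarith
  -- s ≤ L * Q
  have h3 := hsmooth x (hPN hx) y (hPN hy)
  have h4 := hsmooth y (hPN hy) x (hPN hx)
  have hnxy : ‖x - y‖ ^ 2 = Q := by rw [hQdef, norm_sub_rev]
  rw [← hQdef] at h3
  have hsL : s ≤ L * Q := by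
    rw [hxy', hnxy] at h4; rw [hs']; linarith
  -- the step point
  set t : ℝ := s / (L * Q) with ht
  have ht0 : 0 ≤ t := by positivity
  have ht1 : t ≤ 1 := by
    rw [ht, div_le_one (by positivity)]; linarith
  set z := (1 - t) • y + t • x with hz
  have hzP : z ∈ P := hPconv hy hx (by linarith) ht0 (by ring)
  have hzx : z - x = (1 - t) • (y - x) := by
    rw [hz]; module
  have hzy : z - y = (-t) • (y - x) := by
    rw [hz]; module
  have h5 := hconv x (hPN hx) z (hPN hzP)
  have h6 := hsmooth y (hPN hy) z (hPN hzP)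
  rw [hzx, real_inner_smul_right] at h5
  rw [hzy, real_inner_smul_right, norm_smul] at h6
  have hnz : (‖(-t : ℝ)‖ * ‖y - x‖) ^ 2 = t ^ 2 * Q := by
    rw [hQdef, Real.norm_eq_abs, mul_pow, sq_abs]; ring
  rw [hnz] at h6
  -- combine
  have hkey : f y - f x - ⟪g x, y - x⟫ ≥ t * s - L / 2 * (t ^ 2 * Q) := by
    rw [hs']; nlinarith [h5, h6]
  have harith : t * s - L / 2 * (t ^ 2 * Q) = s ^ 2 / (2 * L * Q) := by
    rw [ht]; field_simp; ring
  linarith [hkey, harith.symm.le]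

/-- **Primal progress from (altAdaptive), interior step case.** If `f` is `L`-smooth and convex
on the `D`-neighborhood of a compact convex set `P` of diameter `D`,
`x_{t+1} = (1-γ_t) x_t + γ_t v_t` with `γ_t = min {⟪∇f x_t, x_t - v_t⟫/(M ‖x_t - v_t‖²), 1} < 1`
for some `M > 0`, and `⟪∇f x_{t+1}, x_t - v_t⟫ ≥ 0`, then
`f x_t - f x_{t+1} ≥ (⟪∇f x_t, x_t - v_t⟫² + ⟪∇f x_{t+1}, x_t - v_t⟫²) / (2 max{L,M} ‖x_t - v_t‖²)`. -/
theorem fw_progress_from_altAdaptive {n : ℕ} (P : Set (EuclideanSpace ℝ (Fin n)))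
    (hPne : P.Nonempty) (hPc : IsCompact P) (hPconv : Convex ℝ P)
    (L D : ℝ) (hL : 0 < L)
    (hD : ∀ a ∈ P, ∀ b ∈ P, ‖a - b‖ ≤ D)
    (N : Set (EuclideanSpace ℝ (Fin n)))
    (hN : N = {z | Metric.infDist z P ≤ D})
    (f : EuclideanSpace ℝ (Fin n) → ℝ) (g : EuclideanSpace ℝ (Fin n) → EuclideanSpace ℝ (Fin n))
    (hdiff : ∀ x ∈ N, HasGradientAt f (g x) x)
    (hconv : ∀ x ∈ N, ∀ y ∈ N, f y - f x ≥ ⟪g x, y - x⟫)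
    (hsmooth : ∀ x ∈ N, ∀ y ∈ N, f y - f x ≤ ⟪g x, y - x⟫ + L / 2 * ‖y - x‖ ^ 2)
    (xt vt : EuclideanSpace ℝ (Fin n)) (hxt : xt ∈ P) (hvt : vt ∈ P) (hne : xt ≠ vt)
    (M : ℝ) (hM : 0 < M)
    (γ : ℝ) (hγdef : γ = min (⟪g xt, xt - vt⟫ / (M * ‖xt - vt‖ ^ 2)) 1) (hγlt : γ < 1)
    (hγ0 : 0 ≤ γ)
    (xt1 : EuclideanSpace ℝ (Fin n)) (hstep : xt1 = (1 - γ) • xt + γ • vt)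
    (htest : 0 ≤ ⟪g xt1, xt - vt⟫) :
    f xt - f xt1 ≥ (⟪g xt, xt - vt⟫ ^ 2 + ⟪g xt1, xt - vt⟫ ^ 2) /
      (2 * max L M * ‖xt - vt‖ ^ 2) := by
  -- basic facts
  have hd0 : xt - vt ≠ 0 := sub_ne_zero.mpr hne
  have hns : (0:ℝ) < ‖xt - vt‖ ^ 2 := by
    have := norm_pos_iff.mpr hd0
    positivity
  set Q := ‖xt - vt‖ ^ 2 with hQdef
  set h : ℝ := ⟪g xt, xt - vt⟫ with hh
  set h' : ℝ := ⟪g xt1, xt - vt⟫ with hh'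
  have hD0 : 0 ≤ D := by
    obtain ⟨a, ha⟩ := hPne
    have := hD a ha a ha
    simpa using this
  have hPN : P ⊆ N := by
    intro z hz
    rw [hN]
    simpa [Metric.infDist_zero_of_mem hz] using hD0
  -- γ equals the ratio
  have hγeq : γ = h / (M * Q) := by
    rcases le_or_gt (h / (M * Q)) 1 with hle | hgt
    · rw [hγdef, min_eq_left hle]
    · rw [hγdef, min_eq_right hgt.le] at hγlt ⊢
      exact absurd hγlt (lt_irrefl 1)
  set C := max L M with hC
  have hCL : L ≤ C := le_max_left _ _
  have hCM : M ≤ C := le_max_right _ _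
  have hC0 : 0 < C := lt_of_lt_of_le hL hCL
  rcases eq_or_lt_of_le hγ0 with hγz | hγpos
  · -- γ = 0 : trivial case
    have hγz : γ = 0 := hγz.symm
    have hx1 : xt1 = xt := by
      rw [hstep, hγz]; simp
    have hh0 : h = 0 := by
      have : h / (M * Q) = 0 := by rw [← hγeq, hγz]
      rcases div_eq_zero_iff.mp this with h0 | h0
      · exact h0
      · exact absurd h0 (by positivity)
    have hh'0 : h' = 0 := by rw [hh', hx1, ← hh, hh0]
    rw [hx1, hh0, hh'0]
    simp
  · -- γ > 0
    have hMQ : (0:ℝ) < M * Q := by positivity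
    have hhval : h = γ * (M * Q) := (div_eq_iff (ne_of_gt hMQ)).mp hγeq.symm
    have hhpos : 0 < h := by rw [hhval]; positivity
    -- xt1 in P and distinct from xt
    have hx1P : xt1 ∈ P := by
      rw [hstep]; exact hPconv hxt hvt (by linarith) hγ0 (by ring)
    have hdiffpt : xt - xt1 = γ • (xt - vt) := by
      rw [hstep]; module
    have hx1ne : xt1 ≠ xt := by
      intro hcontra
      apply hd0
      have : xt - xt1 = 0 := by rw [hcontra]; simp
      rw [hdiffpt] at this
      exact (smul_eq_zero.mp this).elim (fun hz => absurd hz (ne_of_gt hγpos)) id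
    -- co-coercivity between xt1 and xt
    have key := cocoercive_aux P N hPN hPconv L hL f g hconv hsmooth xt1 xt hx1P hxt hx1ne
    rw [hdiffpt, inner_smul_right, inner_smul_right, norm_smul] at key
    have hnγ : (‖γ‖ * ‖xt - vt‖) ^ 2 = γ ^ 2 * Q := by
      rw [hQdef, Real.norm_eq_abs, mul_pow, sq_abs]
    rw [hnγ] at key
    have hinner : ⟪g xt - g xt1, xt - vt⟫ = h - h' := by
      rw [inner_sub_left, ← hh, ← hh']
    rw [hinner, ← hh'] at key
    -- key : f xt - f xt1 - γ * h' ≥ (γ * (h - h'))^2 / (2 * L * (γ^2 * Q))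
    have hsimp : (γ * (h - h')) ^ 2 / (2 * L * (γ ^ 2 * Q)) = (h - h') ^ 2 / (2 * L * Q) := by
      rw [mul_pow]
      rw [show 2 * L * (γ ^ 2 * Q) = γ ^ 2 * (2 * L * Q) by ring]
      rw [mul_div_mul_left _ _ (by positivity)]
    rw [hsimp] at key
    -- so f xt - f xt1 ≥ γ * h' + (h-h')^2/(2LQ)
    have lb : f xt - f xt1 ≥ γ * h' + (h - h') ^ 2 / (2 * L * Q) := by linarith
    -- compare with target
    have e1 : γ * h' ≥ h * h' / (C * Q) := by
      rw [ge_iff_le, div_le_iff₀ (by positivity), hhval]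
      nlinarith [mul_nonneg (mul_nonneg hγ0 htest) hns.le]
    have e2 : (h - h') ^ 2 / (2 * L * Q) ≥ (h - h') ^ 2 / (2 * C * Q) := by
      apply div_le_div_of_nonneg_left (by positivity) (by positivity)
      nlinarith
    have e3 : h * h' / (C * Q) + (h - h') ^ 2 / (2 * C * Q) = (h ^ 2 + h' ^ 2) / (2 * C * Q) := by
      field_simp
      ring
    linarith
end

section
/- Let f be convex and differentiable on a compact convex set P, and let the Frank-Wolfe iterates satisfy x_{t+1} = (1-γ_t)x_t + γ_t v_t with v_t ∈ P and γ_t ∈ [0,1]. Then f(x_t) - f(x*) ≥ (∏_{τ=1}^{t-1}(1-γ_τ))·⟪∇f(x*), x_1 - x*⟫ for t ≥ 1, where x* is a minimizer of f over P. In particular, for γ_τ = 2/(τ+2), f(x_t) - f(x*) ≥ (2/(t(t+1)))·⟪∇f(x*), x_1 - x*⟫. -/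
open scoped RealInnerProductSpace BigOperators

/-- **Universal lower bound for Frank-Wolfe with fixed step-sizes.** For convex `f` on compact
convex `P` and iterates `x_{t+1} = (1-γ_t) x_t + γ_t v_t` with `v_t ∈ P`, `γ_t ∈ [0,1]`:
`f (x t) - f x* ≥ (∏_{τ=1}^{t-1} (1-γ_τ)) ⟪∇f x*, x₁ - x*⟫` for `t ≥ 1`; in particular for
`γ_τ = 2/(τ+2)` we get `f (x t) - f x* ≥ (2/(t(t+1))) ⟪∇f x*, x₁ - x*⟫`. -/
theorem fw_universal_lower_bound {n : ℕ} (P : Set (EuclideanSpace ℝ (Fin n)))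
    (hPne : P.Nonempty) (hPc : IsCompact P) (hPconv : Convex ℝ P)
    (f : EuclideanSpace ℝ (Fin n) → ℝ) (g : EuclideanSpace ℝ (Fin n) → EuclideanSpace ℝ (Fin n))
    (hdiff : ∀ x ∈ P, HasGradientAt f (g x) x)
    (hconv : ∀ x ∈ P, ∀ y ∈ P, f y - f x ≥ ⟪g x, y - x⟫)
    (x v : ℕ → EuclideanSpace ℝ (Fin n)) (hx0 : x 0 ∈ P) (hvP : ∀ t, v t ∈ P)
    (γ : ℕ → ℝ) (hγ0 : ∀ t, 0 ≤ γ t) (hγ1 : ∀ t, γ t ≤ 1)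
    (hstep : ∀ t : ℕ, x (t + 1) = (1 - γ t) • x t + γ t • v t)
    (xstar : EuclideanSpace ℝ (Fin n)) (hxstar : xstar ∈ P) (hmin : IsMinOn f P xstar) :
    ∀ t : ℕ, 1 ≤ t →
      (f (x t) - f xstar ≥ (∏ τ ∈ Finset.Icc 1 (t - 1), (1 - γ τ)) * ⟪g xstar, x 1 - xstar⟫) ∧
      ((∀ τ : ℕ, γ τ = 2 / ((τ : ℝ) + 2)) →
        f (x t) - f xstar ≥ (2 / ((t : ℝ) * ((t : ℝ) + 1))) * ⟪g xstar, x 1 - xstar⟫) := by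
  -- all iterates stay in P
  have hxP : ∀ t, x t ∈ P := by
    intro t
    induction t with
    | zero => exact hx0
    | succ k ih =>
      rw [hstep k]
      exact hPconv ih (hvP k) (by linarith [hγ1 k]) (hγ0 k) (by ring)
  -- first-order optimality
  have hfo : ∀ y ∈ P, 0 ≤ ⟪g xstar, y - xstar⟫ := by
    intro y hy
    have hcone : y - xstar ∈ posTangentConeAt P xstar :=
      sub_mem_posTangentConeAt_of_segment_subset (hPconv.segment_subset hxstar hy)
    have := (hmin.localize).hasFDerivWithinAt_nonneg
      ((hdiff xstar hxstar).hasFDerivAt.hasFDerivWithinAt) hcone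
    simpa using this
  set a : ℕ → ℝ := fun t => ⟪g xstar, x t - xstar⟫ with ha
  -- recursion for a
  have hrec : ∀ t, a (t + 1) = (1 - γ t) * a t + γ t * ⟪g xstar, v t - xstar⟫ := by
    intro t
    have : x (t + 1) - xstar = (1 - γ t) • (x t - xstar) + γ t • (v t - xstar) := by
      rw [hstep t]
      module
    simp only [ha, this, inner_add_right, real_inner_smul_right]
  -- main induction
  have hmain : ∀ k : ℕ, a (k + 1) ≥ (∏ τ ∈ Finset.Icc 1 k, (1 - γ τ)) * a 1 := by
    intro k
    induction k with
    | zero => simp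
    | succ k ih =>
      rw [Finset.prod_Icc_succ_top (by omega)]
      have h1 : 0 ≤ 1 - γ (k + 1) := by linarith [hγ1 (k + 1)]
      have h2 : (1 - γ (k + 1)) * ((∏ τ ∈ Finset.Icc 1 k, (1 - γ τ)) * a 1)
          ≤ (1 - γ (k + 1)) * a (k + 1) := mul_le_mul_of_nonneg_left ih h1
      have h3 : 0 ≤ γ (k + 1) * ⟪g xstar, v (k + 1) - xstar⟫ :=
        mul_nonneg (hγ0 (k + 1)) (hfo _ (hvP (k + 1)))
      rw [hrec (k + 1)]
      nlinarith
  -- convexity lower bound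
  have hlb : ∀ t, f (x t) - f xstar ≥ a t := fun t => hconv xstar hxstar (x t) (hxP t)
  -- product formula in special case
  have hprod : ∀ k : ℕ, (∀ τ : ℕ, γ τ = 2 / ((τ : ℝ) + 2)) →
      (∏ τ ∈ Finset.Icc 1 k, (1 - γ τ)) = 2 / (((k : ℝ) + 1) * ((k : ℝ) + 2)) := by
    intro k hγ
    induction k with
    | zero => norm_num
    | succ k ih =>
      rw [Finset.prod_Icc_succ_top (by omega), ih, hγ (k + 1)]
      have hk1 : ((k : ℝ) + 1) ≠ 0 := by positivity
      have hk2 : ((k : ℝ) + 2) ≠ 0 := by positivity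
      have hk3 : ((k : ℝ) + 1 + 2) ≠ 0 := by positivity
      push_cast
      field_simp
      ring
  intro t ht
  obtain ⟨k, rfl⟩ : ∃ k, t = k + 1 := ⟨t - 1, by omega⟩
  have key : a (k + 1) ≥ (∏ τ ∈ Finset.Icc 1 k, (1 - γ τ)) * a 1 := hmain k
  have hsimp : k + 1 - 1 = k := by omega
  constructor
  · rw [hsimp]
    exact le_trans key (hlb (k + 1))
  · intro hγ
    have := hprod k hγ
    have hc : 2 / (((k : ℝ) + 1) * (((k : ℝ) + 1) + 1)) = 2 / (((k : ℝ) + 1) * ((k : ℝ) + 2)) := by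
      ring_nf
    calc f (x (k + 1)) - f xstar ≥ a (k + 1) := hlb (k + 1)
      _ ≥ (∏ τ ∈ Finset.Icc 1 k, (1 - γ τ)) * a 1 := key
      _ = (2 / (((k + 1 : ℕ) : ℝ) * (((k + 1 : ℕ) : ℝ) + 1))) * ⟪g xstar, x 1 - xstar⟫ := by
          simp only [ha]; rw [this]; push_cast; rw [hc]
end

section
/- Approximate Carathéodory (ℓ₂ case): Let P ⊆ ℝⁿ be a compact convex set with ℓ₂-diameter D and let x* ∈ P. For every ε > 0 there exists a point x ∈ P that is a convex combination of at most O(D²/ε²) extreme points of P (specifically, at most ⌈4D²/ε²⌉ + 1 points) with ‖x - x*‖ ≤ ε. -/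
open scoped RealInnerProductSpace BigOperators

set_option maxHeartbeats 1000000

/-- A continuous linear functional `⟪y, ·⟫` attains its minimum over a nonempty compact
convex set at an extreme point. -/
lemma exists_extremePoint_inner_min {n : ℕ} {P : Set (EuclideanSpace ℝ (Fin n))}
    (hPc : IsCompact P) (hPne : P.Nonempty) (y : EuclideanSpace ℝ (Fin n)) :
    ∃ v ∈ Set.extremePoints ℝ P, ∀ z ∈ P, ⟪y, v⟫ ≤ ⟪y, z⟫ := by
  set l : EuclideanSpace ℝ (Fin n) →L[ℝ] ℝ := innerSL ℝ (-y) with hl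
  set F : Set (EuclideanSpace ℝ (Fin n)) := { x ∈ P | ∀ z ∈ P, l z ≤ l x } with hF
  have hexp : IsExposed ℝ P F := fun _ => ⟨l, rfl⟩
  obtain ⟨m, hmP, hm⟩ := hPc.exists_isMaxOn hPne l.continuous.continuousOn
  have hFne : F.Nonempty := ⟨m, hmP, fun z hz => hm hz⟩
  have hFc : IsCompact F := hexp.isCompact hPc
  obtain ⟨v, hv⟩ := hFc.extremePoints_nonempty hFne
  refine ⟨v, hexp.isExtreme.extremePoints_subset_extremePoints hv, fun z hz => ?_⟩
  have h1 : l z ≤ l v := hv.1.2 z hz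
  simp only [hl, innerSL_apply_apply, inner_neg_left] at h1
  linarith

/-- Updating a convex combination by a Frank–Wolfe step. -/
lemma combo_step {E M : Type*} [DecidableEq E] [AddCommMonoid M] [Module ℝ M]
    (S : Finset E) (w : E → ℝ) (v : E) (γ : ℝ) (f : E → M) :
    ∑ p ∈ insert v S,
        ((1 - γ) * (if p ∈ S then w p else 0) + (if p = v then γ else 0)) • f p
      = (1 - γ) • (∑ p ∈ S, w p • f p) + γ • f v := by
  simp only [add_smul]
  rw [Finset.sum_add_distrib]
  congr 1
  · rw [Finset.smul_sum]
    have : ∀ p ∈ insert v S,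
        ((1 - γ) * (if p ∈ S then w p else 0)) • f p
          = (if p ∈ S then (1 - γ) • (w p • f p) else 0) := by
      intro p _
      split_ifs with h
      · rw [mul_smul]
      · simp
    rw [Finset.sum_congr rfl this, Finset.sum_ite_mem,
      Finset.inter_eq_right.mpr (Finset.subset_insert v S)]
  · have : ∀ p ∈ insert v S,
        (if p = v then γ else 0) • f p = (if p = v then γ • f p else 0) := by
      intro p _; split_ifs <;> simp
    rw [Finset.sum_congr rfl this, Finset.sum_ite_eq', if_pos (Finset.mem_insert_self v S)]

/-- The arithmetic core of the Frank–Wolfe convergence analysis with open-loop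
step size `2/T`. -/
lemma fw_arith (T h d D inn : ℝ) (hT2 : 2 ≤ T) (hh0 : 0 ≤ h)
    (hhB : h ≤ 4 * D ^ 2 / T) (hd : d ≤ D) (hd0 : 0 ≤ d) (hinn : inn ≤ -h) :
    h + 2 * (2 / T * inn) + (2 / T * d) ^ 2 ≤ 4 * D ^ 2 / (T + 1) := by
  have hT0 : (0:ℝ) < T := by linarith
  have hγ0 : (0:ℝ) ≤ 2 / T := by positivity
  have hγ1 : 2 / T ≤ 1 := by rw [div_le_one hT0]; linarith
  have hD0 : 0 ≤ D := le_trans hd0 hd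
  have step1 : h + 2 * (2 / T * inn) + (2 / T * d) ^ 2
      ≤ (1 - 2 / T) * h + (2 / T) ^ 2 * D ^ 2 := by
    have e1 : 2 / T * inn ≤ 2 / T * (-h) := mul_le_mul_of_nonneg_left hinn hγ0
    have e2 : (2 / T * d) ^ 2 ≤ (2 / T) ^ 2 * D ^ 2 := by
      rw [mul_pow]
      exact mul_le_mul_of_nonneg_left (by nlinarith) (sq_nonneg _)
    nlinarith [mul_nonneg hγ0 hh0]
  have step2 : (1 - 2 / T) * h ≤ (1 - 2 / T) * (4 * D ^ 2 / T) :=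
    mul_le_mul_of_nonneg_left hhB (by linarith)
  have eq3 : (1 - 2 / T) * (4 * D ^ 2 / T) + (2 / T) ^ 2 * D ^ 2
      = 4 * D ^ 2 * (T - 1) / T ^ 2 := by
    field_simp
    ring
  have step3 : 4 * D ^ 2 * (T - 1) / T ^ 2 ≤ 4 * D ^ 2 / (T + 1) := by
    rw [div_le_div_iff₀ (by positivity) (by linarith)]
    nlinarith [sq_nonneg D]
  linarith

/-- **Approximate Carathéodory theorem (ℓ₂ case).** For a nonempty compact convex `P ⊆ ℝⁿ` of
diameter `D`, any `x* ∈ P` and `ε > 0`, there is a convex combination of at most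
`⌈4D²/ε²⌉ + 1` extreme points of `P` within distance `ε` of `x*`. -/
theorem approx_caratheodory {n : ℕ} (P : Set (EuclideanSpace ℝ (Fin n)))
    (hPne : P.Nonempty) (hPc : IsCompact P) (hPconv : Convex ℝ P)
    (D : ℝ) (hD : ∀ a ∈ P, ∀ b ∈ P, ‖a - b‖ ≤ D)
    (xstar : EuclideanSpace ℝ (Fin n)) (hxstar : xstar ∈ P)
    (ε : ℝ) (hε : 0 < ε) :
    ∃ (S : Finset (EuclideanSpace ℝ (Fin n))) (w : EuclideanSpace ℝ (Fin n) → ℝ),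
      (∀ p ∈ S, p ∈ Set.extremePoints ℝ P) ∧
      S.card ≤ Nat.ceil (4 * D ^ 2 / ε ^ 2) + 1 ∧
      (∀ p ∈ S, 0 ≤ w p) ∧ (∑ p ∈ S, w p) = 1 ∧
      ‖(∑ p ∈ S, w p • p) - xstar‖ ≤ ε := by
  classical
  have hD0 : 0 ≤ D := le_trans (norm_nonneg _) (hD xstar hxstar xstar hxstar)
  -- Frank–Wolfe iteration, as an induction.
  have key : ∀ t : ℕ, ∃ (S : Finset (EuclideanSpace ℝ (Fin n)))
      (w : EuclideanSpace ℝ (Fin n) → ℝ),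
      (∀ p ∈ S, p ∈ Set.extremePoints ℝ P) ∧ S.card ≤ t + 1 ∧
      (∀ p ∈ S, 0 ≤ w p) ∧ (∑ p ∈ S, w p) = 1 ∧
      ‖(∑ p ∈ S, w p • p) - xstar‖ ^ 2 ≤ 4 * D ^ 2 / ((t : ℝ) + 2) := by
    intro t
    induction t with
    | zero =>
      obtain ⟨v, hv⟩ := hPc.extremePoints_nonempty hPne
      refine ⟨{v}, fun _ => 1, ?_, ?_, ?_, ?_, ?_⟩
      · intro p hp; simp only [Finset.mem_singleton] at hp; subst hp; exact hv
      · simp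
      · intro p _; norm_num
      · simp
      · have h1 : ‖v - xstar‖ ≤ D := hD v hv.1 xstar hxstar
        have h0 : (0:ℝ) ≤ ‖v - xstar‖ := norm_nonneg _
        simp only [Finset.sum_singleton, one_smul, Nat.cast_zero]
        nlinarith
    | succ t ih =>
      obtain ⟨S, w, hSext, hScard, hw0, hw1, hbound⟩ := ih
      set x : EuclideanSpace ℝ (Fin n) := ∑ p ∈ S, w p • p with hx
      have hxP : x ∈ P := hPconv.sum_mem hw0 hw1 (fun p hp => (hSext p hp).1)
      obtain ⟨v, hvext, hvmin⟩ := exists_extremePoint_inner_min hPc hPne (x - xstar)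
      have hvP : v ∈ P := hvext.1
      set T : ℝ := (t : ℝ) + 2 with hT
      have hT2 : (2:ℝ) ≤ T := by
        have : (0:ℝ) ≤ (t : ℝ) := Nat.cast_nonneg t
        rw [hT]; linarith
      have hT0 : (0:ℝ) < T := by linarith
      set γ : ℝ := 2 / T with hγ
      have hγ0 : 0 ≤ γ := by rw [hγ]; positivity
      have hγ1 : γ ≤ 1 := by rw [hγ, div_le_one hT0]; linarith
      refine ⟨insert v S,
        fun p => (1 - γ) * (if p ∈ S then w p else 0) + (if p = v then γ else 0),
        ?_, ?_, ?_, ?_, ?_⟩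
      · intro p hp
        rcases Finset.mem_insert.1 hp with h | h
        · subst h; exact hvext
        · exact hSext p h
      · calc (insert v S).card ≤ S.card + 1 := Finset.card_insert_le v S
          _ ≤ t + 1 + 1 := by omega
      · intro p _
        show 0 ≤ (1 - γ) * (if p ∈ S then w p else 0) + (if p = v then γ else 0)
        have h1γ : (0:ℝ) ≤ 1 - γ := by linarith
        split_ifs with hS hv
        · exact add_nonneg (mul_nonneg h1γ (hw0 p hS)) hγ0
        · exact add_nonneg (mul_nonneg h1γ (hw0 p hS)) le_rfl
        · simpa using hγ0
        · simp
      · have := combo_step S w v γ (fun _ => (1:ℝ))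
        simpa [hw1, smul_eq_mul] using this
      · have hsum : ∑ p ∈ insert v S,
            ((1 - γ) * (if p ∈ S then w p else 0) + (if p = v then γ else 0)) • p
              = (1 - γ) • x + γ • v := combo_step S w v γ id
        show ‖(∑ p ∈ insert v S,
            ((1 - γ) * (if p ∈ S then w p else 0) + (if p = v then γ else 0)) • p)
            - xstar‖ ^ 2 ≤ 4 * D ^ 2 / (((t : ℕ) + 1 : ℕ) + 2 : ℝ)
        rw [hsum]
        have hdecomp : (1 - γ) • x + γ • v - xstar = (x - xstar) + γ • (v - x) := by
          module
        rw [hdecomp, norm_add_sq_real]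
        have hinn : ⟪x - xstar, γ • (v - x)⟫ = γ * ⟪x - xstar, v - x⟫ :=
          real_inner_smul_right _ _ _
        have hinn2 : ⟪x - xstar, v - x⟫ ≤ -‖x - xstar‖ ^ 2 := by
          have h1 : ⟪x - xstar, v⟫ ≤ ⟪x - xstar, xstar⟫ := hvmin xstar hxstar
          have h2 : ⟪x - xstar, v - x⟫ = ⟪x - xstar, v⟫ - ⟪x - xstar, x⟫ :=
            inner_sub_right _ _ _
          have h3 : ⟪x - xstar, xstar⟫ - ⟪x - xstar, x⟫ = -⟪x - xstar, x - xstar⟫ := by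
            rw [← inner_sub_right, ← neg_sub x xstar, inner_neg_right]
          have h4 : ⟪x - xstar, x - xstar⟫ = ‖x - xstar‖ ^ 2 := real_inner_self_eq_norm_sq _
          linarith
        have hnrm : ‖γ • (v - x)‖ = γ * ‖v - x‖ := by
          rw [norm_smul, Real.norm_eq_abs, abs_of_nonneg hγ0]
        have hd : ‖v - x‖ ≤ D := hD v hvP x hxP
        have hd0 : (0:ℝ) ≤ ‖v - x‖ := norm_nonneg _
        have hh0 : (0:ℝ) ≤ ‖x - xstar‖ ^ 2 := sq_nonneg _
        have hcast : (((t : ℕ) + 1 : ℕ) + 2 : ℝ) = T + 1 := by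
          rw [hT]; push_cast; ring
        rw [hinn, hnrm, hcast, hγ]
        exact fw_arith T (‖x - xstar‖ ^ 2) (‖v - x‖) D ⟪x - xstar, v - x⟫
          hT2 hh0 hbound hd hd0 hinn2
  -- Conclusion: run enough iterations.
  obtain ⟨S, w, hSext, hScard, hw0, hw1, hbound⟩ := key (Nat.ceil (4 * D ^ 2 / ε ^ 2))
  refine ⟨S, w, hSext, hScard, hw0, hw1, ?_⟩
  set T : ℕ := Nat.ceil (4 * D ^ 2 / ε ^ 2) with hTdef
  have hle : 4 * D ^ 2 / ε ^ 2 ≤ (T : ℝ) := Nat.le_ceil _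
  have hT0 : (0:ℝ) < (T : ℝ) + 2 := by positivity
  have hfinal : 4 * D ^ 2 / ((T : ℝ) + 2) ≤ ε ^ 2 := by
    rw [div_le_iff₀ hT0]
    have he : 4 * D ^ 2 = (4 * D ^ 2 / ε ^ 2) * ε ^ 2 := by
      field_simp
    rw [he]
    have h1 : (4 * D ^ 2 / ε ^ 2) * ε ^ 2 ≤ (T : ℝ) * ε ^ 2 :=
      mul_le_mul_of_nonneg_right hle (sq_nonneg ε)
    nlinarith [sq_nonneg ε]
  have hsq : ‖(∑ p ∈ S, w p • p) - xstar‖ ^ 2 ≤ ε ^ 2 := le_trans hbound hfinal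
  exact (pow_le_pow_iff_left₀ (norm_nonneg _) hε.le two_ne_zero).1 hsq
end

section
/- Let P ⊆ ℝⁿ be compact convex, x̃ with dist(x̃, P) > √ε for some ε > 0, f(x) = ‖x - x̃‖², and suppose x_t ∈ P satisfies max_{v∈P}⟪∇f(x_t), x_t - v⟫ ≤ ε. Then the inequality min_{v∈P}⟪∇f(x_t), v⟫ ≤ ⟪∇f(x_t), x⟫, valid for all x ∈ P, is strictly violated by x̃, i.e., ⟪∇f(x_t), x̃⟫ < min_{v∈P}⟪∇f(x_t), v⟫. -/
open scoped RealInnerProductSpace BigOperators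

/-- **Approximate separating hyperplane.** If `x̃` is `√ε`-far from the nonempty compact convex
set `P` and `x_t ∈ P` has Frank-Wolfe gap at most `ε` for `f x = ‖x - x̃‖²` (gradient
`∇f x_t = 2 (x_t - x̃)`), then the valid inequality `min_{v∈P} ⟪∇f x_t, v⟫ ≤ ⟪∇f x_t, x⟫`
is strictly violated by `x̃`: `⟪∇f x_t, x̃⟫ < ⟪∇f x_t, v⟫` for all `v ∈ P`. -/
theorem fw_approx_separating_hyperplane {n : ℕ} (P : Set (EuclideanSpace ℝ (Fin n)))
    (hPne : P.Nonempty) (hPc : IsCompact P) (hPconv : Convex ℝ P)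
    (ε : ℝ) (hε : 0 < ε)
    (xtilde : EuclideanSpace ℝ (Fin n)) (hfar : Real.sqrt ε < Metric.infDist xtilde P)
    (xt : EuclideanSpace ℝ (Fin n)) (hxt : xt ∈ P)
    (hgap : ∀ v ∈ P, ⟪(2 : ℝ) • (xt - xtilde), xt - v⟫ ≤ ε) :
    ∀ v ∈ P, ⟪(2 : ℝ) • (xt - xtilde), xtilde⟫ < ⟪(2 : ℝ) • (xt - xtilde), v⟫ := by
  intro v hv
  have h1 := hgap v hv
  have h2 : ⟪(2 : ℝ) • (xt - xtilde), xt - xtilde⟫ = 2 * ‖xt - xtilde‖ ^ 2 := by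
    rw [real_inner_smul_left, real_inner_self_eq_norm_sq]
  have hle : Metric.infDist xtilde P ≤ ‖xt - xtilde‖ := by
    calc Metric.infDist xtilde P ≤ dist xtilde xt := Metric.infDist_le_dist_of_mem hxt
      _ = ‖xt - xtilde‖ := by rw [dist_eq_norm, norm_sub_rev]
  have h0 : Real.sqrt ε < ‖xt - xtilde‖ := lt_of_lt_of_le hfar hle
  have hε2 : ε < ‖xt - xtilde‖ ^ 2 := by
    calc ε = Real.sqrt ε ^ 2 := (Real.sq_sqrt hε.le).symm
      _ < ‖xt - xtilde‖ ^ 2 := by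
        have := Real.sqrt_nonneg ε
        nlinarith
  have key : ⟪(2 : ℝ) • (xt - xtilde), xt - v⟫
      = ⟪(2 : ℝ) • (xt - xtilde), xt - xtilde⟫ - ⟪(2 : ℝ) • (xt - xtilde), v⟫
        + ⟪(2 : ℝ) • (xt - xtilde), xtilde⟫ := by
    simp [inner_sub_right]; ring
  linarith
end
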